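/- Let K be a field and Γ ⊆ ℝ an additive subgroup. Then the Hahn series field K((t^Γ)) equipped with the Gauss norm ‖Σ a_γ t^γ‖ = max_{a_γ ≠ 0} e^{−γ} is spherically complete: every decreasing sequence of closed balls has nonempty intersection. -/

import Mathlib

open scoped Classical in
/-- The Gauss norm `‖Σ a_γ t^γ‖ = e^{-order}` on the Hahn series field `K((t^Γ))`. -/
noncomputable def hahnGaussNorm {K : Type*} [Field K] {Γ : AddSubgroup ℝ}
    (x : HahnSeries Γ K) : ℝ :=
  if x = 0 then 0 else Real.exp (-(x.order : ℝ))

/-- The Hahn series field `K((t^Γ))` with the Gauss norm is spherically complete: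
every decreasing sequence of closed balls has nonempty intersection. -/
theorem hahnSeries_sphericallyComplete {K : Type*} [Field K] (Γ : AddSubgroup ℝ)
    (c : ℕ → HahnSeries Γ K) (r : ℕ → ℝ) (hr : ∀ n, 0 ≤ r n)
    (hdec : ∀ n, {y : HahnSeries Γ K | hahnGaussNorm (y - c (n + 1)) ≤ r (n + 1)} ⊆
      {y : HahnSeries Γ K | hahnGaussNorm (y - c n) ≤ r n}) :
    (⋂ n : ℕ, {y : HahnSeries Γ K | hahnGaussNorm (y - c n) ≤ r n}).Nonempty := by
  classical
  set B : ℕ → Set (HahnSeries Γ K) :=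
    fun n => {y : HahnSeries Γ K | hahnGaussNorm (y - c n) ≤ r n} with hB
  have hchain : ∀ m n, m ≤ n → B n ⊆ B m := by
    intro m n h
    induction h with
    | refl => exact subset_rfl
    | step h ih => exact ih.trans' (hdec _)
  have hself : ∀ n, c n ∈ B n := by
    intro n
    simp only [hB, Set.mem_setOf_eq, sub_self, hahnGaussNorm, if_pos rfl]
    exact hr n
  have hmem : ∀ m n, m ≤ n → c n ∈ B m := fun m n h => hchain m n h (hself n)
  by_cases h0 : ∃ n, r n = 0
  · obtain ⟨n, hn⟩ := h0
    have hsing : ∀ y ∈ B n, y = c n := by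
      intro y hy
      by_contra hne
      have : hahnGaussNorm (y - c n) ≤ 0 := hn ▸ hy
      rw [hahnGaussNorm, if_neg (sub_ne_zero.mpr hne)] at this
      exact absurd this (not_le.mpr (Real.exp_pos _))
    refine ⟨c n, Set.mem_iInter.mpr fun m => ?_⟩
    rcases le_total m n with h | h
    · exact hmem m n h
    · have : c m = c n := hsing _ (hmem n m h)
      exact this ▸ hself m
  · push_neg at h0
    have hrpos : ∀ n, 0 < r n := fun n => lt_of_le_of_ne (hr n) (Ne.symm (h0 n))
    set ρ : ℕ → ℝ := fun n => -Real.log (r n) with hρset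
    have hρ : ∀ n, ρ n = -Real.log (r n) := fun n => rfl
    -- membership in ball characterization
    have hball : ∀ n y, y ∈ B n ↔ y = c n ∨ (y ≠ c n ∧ ρ n ≤ ((y - c n).order : ℝ)) := by
      intro n y
      by_cases hy : y = c n
      · constructor
        · intro _; exact Or.inl hy
        · intro _; rw [hy]; exact hself n
      · simp only [hB, Set.mem_setOf_eq, hahnGaussNorm, if_neg (sub_ne_zero.mpr hy), hy,
          false_or, ne_eq, not_false_eq_true, true_and]
        rw [hρ n]
        constructor
        · intro h
          have := Real.log_le_log (Real.exp_pos _) h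
          rw [Real.log_exp] at this
          linarith
        · intro h
          calc Real.exp (-((y - c n).order : ℝ)) ≤ Real.exp (Real.log (r n)) := by
                apply Real.exp_le_exp.mpr; linarith
            _ = r n := Real.exp_log (hrpos n)
    -- coefficients agree below the cutoff
    have hcc : ∀ m n, m ≤ n → ∀ γ : Γ, (γ : ℝ) < ρ m → (c n).coeff γ = (c m).coeff γ := by
      intro m n h γ hγ
      rcases (hball m (c n)).mp (hmem m n h) with heq | ⟨hne, hord⟩
      · rw [heq]
      · have hlt : γ < (c n - c m).order := by
          have : (γ : ℝ) < (((c n - c m).order : Γ) : ℝ) := lt_of_lt_of_le hγ hord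
          exact_mod_cast this
        have := HahnSeries.coeff_eq_zero_of_lt_order hlt
        rw [HahnSeries.coeff_sub] at this
        exact sub_eq_zero.mp this
    have hcc' : ∀ m n (γ : Γ), (γ : ℝ) < ρ m → (γ : ℝ) < ρ n →
        (c n).coeff γ = (c m).coeff γ := by
      intro m n γ hm hn
      rcases le_total m n with h | h
      · exact hcc m n h γ hm
      · exact (hcc n m h γ hn).symm
    set f : Γ → K := fun γ => if h : ∃ k, (γ : ℝ) < ρ k then (c h.choose).coeff γ else 0
      with hf
    have hfc : ∀ (γ : Γ) n, (γ : ℝ) < ρ n → f γ = (c n).coeff γ := by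
      intro γ n hγ
      have hex : ∃ k, (γ : ℝ) < ρ k := ⟨n, hγ⟩
      simp only [hf, dif_pos hex]
      exact hcc' n hex.choose γ hγ hex.choose_spec
    have hsupp : (Function.support f).IsPWO := by
      refine Set.IsWF.isPWO ?_
      rw [Set.isWF_iff_no_descending_seq]
      intro g hg hmem'
      have hg0 : f (g 0) ≠ 0 := hmem' 0
      have hex : ∃ k, ((g 0 : Γ) : ℝ) < ρ k := by
        by_contra hno
        simp only [hf, dif_neg hno] at hg0
        exact hg0 rfl
      obtain ⟨k, hk⟩ := hex
      have hsub : ∀ i, g (i + 1) ∈ (c k).support := by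
        intro i
        have hlt : g (i + 1) < g 0 := hg (Nat.succ_pos i)
        have hltρ : ((g (i + 1) : Γ) : ℝ) < ρ k := lt_trans (by exact_mod_cast hlt) hk
        have heq := hfc (g (i + 1)) k hltρ
        have hne : f (g (i + 1)) ≠ 0 := hmem' (i + 1)
        rw [heq] at hne
        exact hne
      have hwf := (c k).isWF_support
      rw [Set.isWF_iff_no_descending_seq] at hwf
      exact hwf (fun i => g (i + 1)) (fun i j hij => hg (by omega)) hsub
    set x : HahnSeries Γ K := ⟨f, hsupp⟩ with hx
    have hxc : ∀ γ, x.coeff γ = f γ := fun γ => rfl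
    refine ⟨x, Set.mem_iInter.mpr fun n => ?_⟩
    rw [hball]
    by_cases hxn : x = c n
    · exact Or.inl hxn
    · refine Or.inr ⟨hxn, ?_⟩
      by_contra hlt
      push_neg at hlt
      have hcoef : (x - c n).coeff ((x - c n).order) ≠ 0 :=
        mt HahnSeries.coeff_order_eq_zero.mp (sub_ne_zero.mpr hxn)
      have : (x - c n).coeff ((x - c n).order) = 0 := by
        rw [HahnSeries.coeff_sub, hxc, hfc _ n hlt, sub_self]
      exact hcoef this
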